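/- Under the MDP regularity assumptions and the nearest neighbor kernel assumptions, the composed operator H = Γ_NN ∘ F, acting on bounded measurable functions Q : X × A → ℝ by (HQ)(x,a) = Σ_{i=1}^n K(x,i)[ r(c_i,a) + γ ∫_X p(y|c_i,a) max_{b∈A} Q(y,b) λ(dy) ], is a γ-contraction with respect to the supremum norm: ‖HQ₁ − HQ₂‖_∞ ≤ γ‖Q₁ − Q₂‖_∞ for all bounded measurable Q₁, Q₂. -/
import Mathlib


open MeasureTheory

/-- The composed operator `H = Γ_NN ∘ F` is a `γ`-contraction in the sup norm
on bounded measurable functions on `X × A`. -/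
theorem composed_nn_bellman_operator_contraction
    (d : ℕ) (X : Set (EuclideanSpace ℝ (Fin d)))
    (hXne : X.Nonempty) (hXcomp : IsCompact X)
    (A : Type*) [Fintype A] [Nonempty A]
    (γ : ℝ) (hγ : γ ∈ Set.Ioo (0:ℝ) 1)
    (r : EuclideanSpace ℝ (Fin d) → A → ℝ)
    (hr_meas : ∀ a, Measurable fun x => r x a)
    (p : EuclideanSpace ℝ (Fin d) → EuclideanSpace ℝ (Fin d) → A → ℝ)
    (hp_meas : ∀ x ∈ X, ∀ a : A, Measurable fun y => p y x a)
    (hp_nonneg : ∀ y ∈ X, ∀ x ∈ X, ∀ a : A, 0 ≤ p y x a)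
    (hp_int : ∀ x ∈ X, ∀ a : A, ∫ y in X, p y x a = 1)
    (n : ℕ) (hn : 0 < n)
    (c : Fin n → EuclideanSpace ℝ (Fin d)) (hc : ∀ i, c i ∈ X)
    (K : EuclideanSpace ℝ (Fin d) → Fin n → ℝ)
    (hK_meas : ∀ i, Measurable fun x => K x i)
    (hK_nonneg : ∀ x i, 0 ≤ K x i)
    (hK_sum : ∀ x, ∑ i, K x i = 1)
    (Q₁ Q₂ : EuclideanSpace ℝ (Fin d) → A → ℝ)
    (hQ₁_meas : ∀ a, Measurable fun x => Q₁ x a)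
    (hQ₂_meas : ∀ a, Measurable fun x => Q₂ x a)
    (hQ₁_bdd : ∃ B : ℝ, ∀ x ∈ X, ∀ a : A, |Q₁ x a| ≤ B)
    (hQ₂_bdd : ∃ B : ℝ, ∀ x ∈ X, ∀ a : A, |Q₂ x a| ≤ B)
    (C : ℝ) (hC : ∀ x ∈ X, ∀ a : A, |Q₁ x a - Q₂ x a| ≤ C) :
    ∀ x ∈ X, ∀ a : A,
      |(∑ i, K x i * (r (c i) a + γ * ∫ y in X, p y (c i) a * ⨆ b : A, Q₁ y b)) -
        ∑ i, K x i * (r (c i) a + γ * ∫ y in X, p y (c i) a * ⨆ b : A, Q₂ y b)|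
      ≤ γ * C := by

  obtain ⟨x₀, hx₀⟩ := hXne
  have hC0 : 0 ≤ C := le_trans (abs_nonneg _) (hC x₀ hx₀ (Classical.arbitrary A))
  have hXmeas : MeasurableSet X := hXcomp.isClosed.measurableSet
  obtain ⟨B₁, hB₁⟩ := hQ₁_bdd
  obtain ⟨B₂, hB₂⟩ := hQ₂_bdd
  intro x hx a
  set S₁ : EuclideanSpace ℝ (Fin d) → ℝ := fun y => ⨆ b : A, Q₁ y b with hS₁
  set S₂ : EuclideanSpace ℝ (Fin d) → ℝ := fun y => ⨆ b : A, Q₂ y b with hS₂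
  have hbdd : ∀ (Q : EuclideanSpace ℝ (Fin d) → A → ℝ) y, BddAbove (Set.range (Q y)) :=
    fun Q y => (Set.finite_range _).bddAbove
  -- pointwise bound on S₁, S₂ over X
  have hS₁bd : ∀ y ∈ X, |S₁ y| ≤ B₁ := by
    intro y hy
    rw [abs_le]
    constructor
    · exact le_trans (neg_le_of_abs_le (hB₁ y hy (Classical.arbitrary A)))
        (le_ciSup (hbdd Q₁ y) _)
    · exact ciSup_le fun b => le_of_abs_le (hB₁ y hy b)
  have hS₂bd : ∀ y ∈ X, |S₂ y| ≤ B₂ := by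
    intro y hy
    rw [abs_le]
    constructor
    · exact le_trans (neg_le_of_abs_le (hB₂ y hy (Classical.arbitrary A)))
        (le_ciSup (hbdd Q₂ y) _)
    · exact ciSup_le fun b => le_of_abs_le (hB₂ y hy b)
  have hSdiff : ∀ y ∈ X, |S₁ y - S₂ y| ≤ C := by
    intro y hy
    rw [abs_sub_le_iff]
    constructor
    · rw [sub_le_iff_le_add]
      refine ciSup_le fun b => ?_
      have h1 := (abs_sub_le_iff.mp (hC y hy b)).1
      have h2 := le_ciSup (hbdd Q₂ y) b
      linarith
    · rw [sub_le_iff_le_add]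
      refine ciSup_le fun b => ?_
      have h1 := (abs_sub_le_iff.mp (hC y hy b)).2
      have h2 := le_ciSup (hbdd Q₁ y) b
      linarith
  -- measurability of S₁, S₂
  have hSmeas : ∀ (Q : EuclideanSpace ℝ (Fin d) → A → ℝ),
      (∀ a, Measurable fun x => Q x a) → Measurable (fun y => ⨆ b : A, Q y b) := by
    intro Q hQ
    have : (fun y => ⨆ b : A, Q y b) =
        fun y => (Finset.univ.sup' Finset.univ_nonempty (fun b => Q y b)) := by
      funext y
      rw [Finset.sup'_eq_csSup_image]
      simp [Set.image_univ, iSup]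
    rw [this]
    have hm := Finset.measurable_sup' Finset.univ_nonempty (fun b (_ : b ∈ Finset.univ) => hQ b)
    convert hm using 1
    funext y
    simp [Finset.sup'_apply]
  have hS₁meas : Measurable S₁ := hSmeas Q₁ hQ₁_meas
  have hS₂meas : Measurable S₂ := hSmeas Q₂ hQ₂_meas
  -- key integral bound for each i
  have key : ∀ i : Fin n,
      |(∫ y in X, p y (c i) a * S₁ y) - ∫ y in X, p y (c i) a * S₂ y| ≤ C := by
    intro i
    have hpm : Measurable fun y => p y (c i) a := hp_meas (c i) (hc i) a
    have hpint : Integrable (fun y => p y (c i) a) (volume.restrict X) := by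
      by_contra h
      have := MeasureTheory.integral_undef h
      rw [hp_int (c i) (hc i) a] at this
      norm_num at this
    have haeX : ∀ᵐ y ∂(volume.restrict X), y ∈ X := ae_restrict_mem hXmeas
    have hint : ∀ (S : EuclideanSpace ℝ (Fin d) → ℝ) (B : ℝ), Measurable S →
        (∀ y ∈ X, |S y| ≤ B) →
        Integrable (fun y => p y (c i) a * S y) (volume.restrict X) := by
      intro S B hSm hSb
      refine (hpint.const_mul B).mono' ((hpm.mul hSm).aestronglyMeasurable) ?_
      filter_upwards [haeX] with y hy
      have hp0 := hp_nonneg y hy (c i) (hc i) a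
      rw [Real.norm_eq_abs, abs_mul, abs_of_nonneg hp0]
      calc p y (c i) a * |S y| ≤ p y (c i) a * B :=
            mul_le_mul_of_nonneg_left (hSb y hy) hp0
        _ = B * p y (c i) a := mul_comm _ _
    have h1 := hint S₁ B₁ hS₁meas hS₁bd
    have h2 := hint S₂ B₂ hS₂meas hS₂bd
    have hsub : (∫ y in X, p y (c i) a * S₁ y) - (∫ y in X, p y (c i) a * S₂ y)
        = ∫ y in X, p y (c i) a * (S₁ y - S₂ y) := by
      rw [← MeasureTheory.integral_sub h1 h2]
      congr 1; funext y; ring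
    rw [hsub]
    have hCp : Integrable (fun y => C * p y (c i) a) (volume.restrict X) :=
      hpint.const_mul C
    have hb : ‖∫ y in X, p y (c i) a * (S₁ y - S₂ y)‖ ≤ ∫ y in X, C * p y (c i) a := by
      refine MeasureTheory.norm_integral_le_of_norm_le hCp ?_
      filter_upwards [haeX] with y hy
      have hp0 := hp_nonneg y hy (c i) (hc i) a
      rw [Real.norm_eq_abs, abs_mul, abs_of_nonneg hp0, mul_comm C]
      exact mul_le_mul_of_nonneg_left (hSdiff y hy) hp0
    rw [Real.norm_eq_abs] at hb
    calc |∫ y in X, p y (c i) a * (S₁ y - S₂ y)| ≤ ∫ y in X, C * p y (c i) a := hb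
      _ = C * ∫ y in X, p y (c i) a := integral_const_mul C _
      _ = C := by rw [hp_int (c i) (hc i) a, mul_one]
  -- combine
  have hdiff : (∑ i, K x i * (r (c i) a + γ * ∫ y in X, p y (c i) a * S₁ y)) -
      (∑ i, K x i * (r (c i) a + γ * ∫ y in X, p y (c i) a * S₂ y))
      = ∑ i, K x i * γ * ((∫ y in X, p y (c i) a * S₁ y) - ∫ y in X, p y (c i) a * S₂ y) := by
    rw [← Finset.sum_sub_distrib]
    congr 1; funext i; ring
  rw [hdiff]
  calc |∑ i, K x i * γ * ((∫ y in X, p y (c i) a * S₁ y) - ∫ y in X, p y (c i) a * S₂ y)|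
      ≤ ∑ i, |K x i * γ * ((∫ y in X, p y (c i) a * S₁ y) - ∫ y in X, p y (c i) a * S₂ y)| :=
        Finset.abs_sum_le_sum_abs _ _
    _ ≤ ∑ i, K x i * γ * C := by
        refine Finset.sum_le_sum fun i _ => ?_
        rw [abs_mul, abs_of_nonneg (mul_nonneg (hK_nonneg x i) hγ.1.le)]
        exact mul_le_mul_of_nonneg_left (key i) (mul_nonneg (hK_nonneg x i) hγ.1.le)
    _ = γ * C := by
        rw [← Finset.sum_mul, ← Finset.sum_mul, hK_sum x, one_mul]
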